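/- arXiv:1707.00420 — 6 statements merged into one kernel-verified Lean document; each statement's English description precedes it below -/
import Mathlib

section
/- For any positive reals a₁, …, a_n with n ≥ 2, the arithmetic mean satisfies (1/n)∑ aᵢ ≤ (∏ aᵢ)^{1/n} + ((n−1)/n) · max_{i≠j} |aᵢ − aⱼ|. -/
lemma stmt_4_aux (n : ℕ) (hn : 2 ≤ n) (a : Fin n → ℝ) (ha : ∀ i, 0 < a i)
    (hne : (Finset.univ.offDiag : Finset (Fin n × Fin n)).Nonempty) :
    (1 / (n : ℝ)) * ∑ i, a i ≤
      (∏ i, a i) ^ ((1 : ℝ) / n) +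
        ((n - 1 : ℝ) / n) *
          (Finset.univ.offDiag.sup' hne (fun p => |a p.1 - a p.2|)) := by
  have hn0 : (0 : ℝ) < n := by
    have : 0 < n := by omega
    exact_mod_cast this
  set D := Finset.univ.offDiag.sup' hne (fun p => |a p.1 - a p.2|) with hDdef
  have hD0 : 0 ≤ D :=
    le_trans (abs_nonneg _) (Finset.le_sup' (fun p => |a p.1 - a p.2|) hne.choose_spec)
  obtain ⟨i0, -, hi0⟩ := Finset.exists_min_image Finset.univ a
    ⟨⟨0, by omega⟩, Finset.mem_univ _⟩
  -- each a j ≤ a i0 + D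
  have hbound : ∀ j, a j ≤ a i0 + D := by
    intro j
    by_cases hj : j = i0
    · subst hj; linarith
    · have hmem : (j, i0) ∈ (Finset.univ.offDiag : Finset (Fin n × Fin n)) :=
        Finset.mem_offDiag.mpr ⟨Finset.mem_univ _, Finset.mem_univ _, hj⟩
      have := Finset.le_sup' (fun p => |a p.1 - a p.2|) hmem
      have habs : |a j - a i0| ≤ D := this
      have := abs_le.mp habs
      linarith [this.2]
  -- sum bound
  have hsum : ∑ i, a i ≤ a i0 + ((n : ℝ) - 1) * (a i0 + D) := by
    have hsplit : ∑ i, a i = ∑ i ∈ Finset.univ \ {i0}, a i + a i0 :=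
      (Finset.sum_eq_sum_sdiff_singleton_add (Finset.mem_univ i0) a).symm ▸ rfl
    have hrest : ∑ i ∈ Finset.univ \ {i0}, a i ≤ ((n : ℝ) - 1) * (a i0 + D) := by
      have hcard : (Finset.univ \ {i0} : Finset (Fin n)).card = n - 1 := by
        rw [Finset.card_sdiff_of_subset (by simp)]
        simp
      calc ∑ i ∈ Finset.univ \ {i0}, a i
          ≤ ∑ _i ∈ Finset.univ \ {i0}, (a i0 + D) :=
            Finset.sum_le_sum (fun i _ => hbound i)
        _ = ((n - 1 : ℕ) : ℝ) * (a i0 + D) := by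
            rw [Finset.sum_const, hcard, nsmul_eq_mul]
        _ = ((n : ℝ) - 1) * (a i0 + D) := by
            have : ((n - 1 : ℕ) : ℝ) = (n : ℝ) - 1 := by
              have : 1 ≤ n := by omega
              push_cast [this]; ring
            rw [this]
    rw [Finset.sum_eq_sum_sdiff_singleton_add (Finset.mem_univ i0) a]
    linarith
  -- geometric mean bound
  have hGM : a i0 ≤ (∏ i, a i) ^ ((1 : ℝ) / n) := by
    have hprod : (a i0) ^ n ≤ ∏ i, a i := by
      calc (a i0) ^ n = ∏ _i : Fin n, a i0 := by simp
        _ ≤ ∏ i, a i := Finset.prod_le_prod (fun i _ => (ha i0).le)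
            (fun i _ => hi0 i (Finset.mem_univ i))
    have h2 : ((a i0) ^ n : ℝ) ^ ((1 : ℝ) / n) ≤ (∏ i, a i) ^ ((1 : ℝ) / n) :=
      Real.rpow_le_rpow (pow_nonneg (ha i0).le n) hprod (by positivity)
    calc a i0 = ((a i0) ^ n) ^ ((1 : ℝ) / n) := by
          rw [← Real.rpow_natCast (a i0) n, ← Real.rpow_mul (le_of_lt (ha i0)),
            mul_one_div, div_self (ne_of_gt hn0), Real.rpow_one]
      _ ≤ _ := h2
  have key : (1 / (n : ℝ)) * ∑ i, a i ≤ a i0 + ((n : ℝ) - 1) / n * D := by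
    calc (1 / (n : ℝ)) * ∑ i, a i
        ≤ (1 / (n : ℝ)) * (a i0 + ((n : ℝ) - 1) * (a i0 + D)) :=
          mul_le_mul_of_nonneg_left hsum (by positivity)
      _ = a i0 + ((n : ℝ) - 1) / n * D := by field_simp; ring
  linarith

theorem stmt_4 (n : ℕ) (hn : 2 ≤ n) (a : Fin n → ℝ) (ha : ∀ i, 0 < a i) :
    (1 / (n : ℝ)) * ∑ i, a i ≤
      (∏ i, a i) ^ ((1 : ℝ) / n) +
        ((n - 1 : ℝ) / n) *
          (Finset.univ.offDiag.sup'
            ⟨(⟨0, by omega⟩, ⟨1, by omega⟩),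
              Finset.mem_offDiag.mpr
                ⟨Finset.mem_univ _, Finset.mem_univ _, by simp [Fin.ext_iff]⟩⟩
            (fun p => |a p.1 - a p.2|)) := by
  exact stmt_4_aux n hn a ha _
end

section
/- For any positive reals a₁, …, a_n, the difference between the sum and n times the geometric mean satisfies ∑ aᵢ − n(∏ aᵢ)^{1/n} ≥ (max √aᵢ − min √aᵢ)². -/
lemma amgm_aux (n : ℕ) (hn : 0 < n) (b : Fin n → ℝ) (hb : ∀ i, 0 ≤ b i) :
    (n : ℝ) * (∏ i, b i) ^ ((1 : ℝ) / n) ≤ ∑ i, b i := by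
  have hn' : (n : ℝ) ≠ 0 := Nat.cast_ne_zero.mpr hn.ne'
  have hw : ∀ i ∈ (Finset.univ : Finset (Fin n)), (0:ℝ) ≤ (1:ℝ)/n := by
    intro i _; positivity
  have hw' : ∑ _i : Fin n, (1:ℝ)/n = 1 := by
    rw [Finset.sum_const, Finset.card_univ, Fintype.card_fin, nsmul_eq_mul]
    field_simp
  have h := Real.geom_mean_le_arith_mean_weighted Finset.univ (fun _ => (1:ℝ)/n) b hw hw'
    (fun i _ => hb i)
  rw [Real.finset_prod_rpow _ _ (fun i _ => hb i)] at h
  have h2 := mul_le_mul_of_nonneg_left h (Nat.cast_nonneg n : (0:ℝ) ≤ n)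
  calc (n : ℝ) * (∏ i, b i) ^ ((1 : ℝ) / n)
      ≤ (n : ℝ) * ∑ i, (1:ℝ)/n * b i := h2
    _ = ∑ i, b i := by
        rw [Finset.mul_sum]
        refine Finset.sum_congr rfl fun i _ => ?_
        field_simp

theorem stmt_5 (n : ℕ) (hn : 0 < n) (a : Fin n → ℝ) (ha : ∀ i, 0 < a i) :
    (∑ i, a i) - (n : ℝ) * (∏ i, a i) ^ ((1 : ℝ) / n) ≥
      (Finset.univ.sup' ⟨⟨0, hn⟩, Finset.mem_univ _⟩ (fun i => Real.sqrt (a i)) -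
       Finset.univ.inf' ⟨⟨0, hn⟩, Finset.mem_univ _⟩ (fun i => Real.sqrt (a i)))^2 := by
  have hne : (Finset.univ : Finset (Fin n)).Nonempty := ⟨⟨0, hn⟩, Finset.mem_univ _⟩
  obtain ⟨M, _, hM⟩ := Finset.exists_mem_eq_sup' hne (fun i => Real.sqrt (a i))
  obtain ⟨m, _, hm⟩ := Finset.exists_mem_eq_inf' hne (fun i => Real.sqrt (a i))
  rw [hM, hm]
  by_cases heq : Real.sqrt (a M) = Real.sqrt (a m)
  · rw [heq, sub_self]
    simp only [ne_eq, OfNat.ofNat_ne_zero, not_false_eq_true, zero_pow]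
    have := amgm_aux n hn a (fun i => (ha i).le)
    linarith
  · have hMm : M ≠ m := fun h => heq (by rw [h])
    set g := Real.sqrt (a M * a m) with hg
    set b : Fin n → ℝ := fun i => if i = M then g else if i = m then g else a i with hb
    have hbnn : ∀ i, 0 ≤ b i := by
      intro i; simp only [hb]
      split_ifs <;> first | exact Real.sqrt_nonneg _ | exact (ha i).le
    have hpair : ({M, m} : Finset (Fin n)) ⊆ Finset.univ := Finset.subset_univ _
    have hbM : b M = g := by simp [hb]
    have hbm : b m = g := by simp [hb, hMm]
    have hbo : ∀ i ∈ Finset.univ \ ({M, m} : Finset (Fin n)), b i = a i := by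
      intro i hi
      simp only [Finset.mem_sdiff, Finset.mem_insert, Finset.mem_singleton, not_or] at hi
      simp [hb, hi.2.1, hi.2.2]
    have hgg : g * g = a M * a m :=
      Real.mul_self_sqrt (mul_nonneg (ha M).le (ha m).le)
    -- product equality
    have hprod : ∏ i, b i = ∏ i, a i := by
      rw [← Finset.prod_sdiff hpair, ← Finset.prod_sdiff hpair (f := a)]
      congr 1
      · exact Finset.prod_congr rfl hbo
      · rw [Finset.prod_pair hMm, Finset.prod_pair hMm, hbM, hbm, hgg]
    -- sum equality
    have hsum : ∑ i, b i = (∑ i, a i) - (a M + a m - 2 * g) := by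
      rw [← Finset.sum_sdiff hpair, ← Finset.sum_sdiff hpair (f := a),
        Finset.sum_congr rfl hbo, Finset.sum_pair hMm, Finset.sum_pair hMm, hbM, hbm]
      ring
    have hamgm := amgm_aux n hn b hbnn
    rw [hprod, hsum] at hamgm
    have hsq : (Real.sqrt (a M) - Real.sqrt (a m))^2 = a M + a m - 2 * g := by
      rw [sub_sq, Real.sq_sqrt (ha M).le, Real.sq_sqrt (ha m).le, hg,
        Real.sqrt_mul (ha M).le]
      ring
    rw [hsq]
    linarith
end

section
/- Let λ₁ ≥ ⋯ ≥ λ_k > 0, σ > 0, M ≥ 1, and R ≥ 0. Then the gap (2^{-2R/k}/M)·(∏_{l=1}^k (λ_l+σ²))^{1/k}·( ∑_{l=1}^k λ_l/(λ_l+σ²)² − k(∏_{l=1}^k λ_l/(λ_l+σ²)²)^{1/k} ) is at most (2^{-2R/k}/M) · k · (λ₁+σ²)/(4σ²). -/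
theorem stmt_8 (σ : ℝ) (hσ : 0 < σ) (k M : ℕ) (hk : 0 < k) (hM : 1 ≤ M)
    (R : ℝ) (hR : 0 ≤ R) (lam : Fin k → ℝ)
    (hpos : ∀ l, 0 < lam l) (hdesc : ∀ i j : Fin k, i ≤ j → lam j ≤ lam i) :
    (2 : ℝ) ^ (-(2 * R) / k) / M *
      ((∏ l, (lam l + σ^2)) ^ ((1 : ℝ) / k) *
        (∑ l, lam l / (lam l + σ^2)^2 -
          (k : ℝ) * (∏ l, lam l / (lam l + σ^2)^2) ^ ((1 : ℝ) / k))) ≤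
    (2 : ℝ) ^ (-(2 * R) / k) / M * ((k : ℝ) * (lam ⟨0, hk⟩ + σ^2) / (4 * σ^2)) := by
  have hM' : (0:ℝ) < M := by exact_mod_cast hM
  have hfac : (0:ℝ) ≤ (2:ℝ) ^ (-(2*R)/(k:ℝ)) / M := by positivity
  apply mul_le_mul_of_nonneg_left _ hfac
  set x := lam ⟨0, hk⟩ + σ^2 with hx
  have hx0 : 0 < x := by have := hpos ⟨0,hk⟩; positivity
  have hP0 : (0:ℝ) ≤ ∏ l, (lam l + σ^2) :=
    Finset.prod_nonneg fun l _ => by nlinarith [hpos l]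
  have hA0 : (0:ℝ) ≤ (∏ l, (lam l + σ^2)) ^ ((1:ℝ)/k) := Real.rpow_nonneg hP0 _
  have hA : (∏ l, (lam l + σ^2)) ^ ((1:ℝ)/k) ≤ x := by
    have h1 : ∏ l, (lam l + σ^2) ≤ x ^ k := by
      calc ∏ l, (lam l + σ^2) ≤ ∏ _l : Fin k, x := by
            apply Finset.prod_le_prod
            · intro l _; nlinarith [hpos l]
            · intro l _
              exact add_le_add_left (hdesc ⟨0,hk⟩ l (Nat.zero_le _)) _
        _ = x ^ k := by simp
    calc (∏ l, (lam l + σ^2)) ^ ((1:ℝ)/k)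
        ≤ (x ^ k) ^ ((1:ℝ)/k) := Real.rpow_le_rpow hP0 h1 (by positivity)
      _ = x := by
          rw [← Real.rpow_natCast x k, ← Real.rpow_mul hx0.le,
            mul_one_div, div_self (by exact_mod_cast hk.ne' : (k:ℝ) ≠ 0),
            Real.rpow_one]
  have hB0 : (0:ℝ) ≤ ∑ l, lam l / (lam l + σ^2)^2 :=
    Finset.sum_nonneg fun l _ => by
      have := hpos l; positivity
  have hB : ∑ l, lam l / (lam l + σ^2)^2 ≤ (k:ℝ) / (4*σ^2) := by
    calc ∑ l, lam l / (lam l + σ^2)^2 ≤ ∑ _l : Fin k, 1/(4*σ^2) := by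
          apply Finset.sum_le_sum
          intro l _
          rw [div_le_div_iff₀ (by nlinarith [hpos l]) (by positivity)]
          nlinarith [sq_nonneg (lam l - σ^2), hpos l]
      _ = (k:ℝ)/(4*σ^2) := by
          rw [Finset.sum_const, Finset.card_fin]; simp; ring
  have hC0 : (0:ℝ) ≤ (k:ℝ) * (∏ l, lam l/(lam l+σ^2)^2) ^ ((1:ℝ)/k) := by
    apply mul_nonneg (by positivity)
    exact Real.rpow_nonneg (Finset.prod_nonneg fun l _ => by
      have := hpos l; positivity) _
  calc (∏ l, (lam l + σ^2)) ^ ((1:ℝ)/k) *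
        (∑ l, lam l / (lam l + σ^2)^2 -
          (k:ℝ) * (∏ l, lam l / (lam l + σ^2)^2) ^ ((1:ℝ)/k))
      ≤ (∏ l, (lam l + σ^2)) ^ ((1:ℝ)/k) * (∑ l, lam l / (lam l + σ^2)^2) := by
        apply mul_le_mul_of_nonneg_left _ hA0; linarith
    _ ≤ x * ((k:ℝ)/(4*σ^2)) := mul_le_mul hA hB hB0 hx0.le
    _ = (k:ℝ) * x / (4*σ^2) := by ring
end

section
/- Let λ₁ ≥ ⋯ ≥ λ_r > 0 with λ_{r+1} := 0, and define R_k = (1/2)∑_{l=1}^k log₂(λ_l/λ_k) for 1 ≤ k ≤ r (with R_1 = 0) and θ_k(R) = 2^{-2R/k}(∏_{l=1}^k λ_l)^{1/k}. Then for 1 ≤ k < r and R ≥ 0: R_k ≤ R < R_{k+1} if and only if λ_{k+1} < θ_k(R) ≤ λ_k. -/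
theorem stmt_12 (r : ℕ) (lam : ℕ → ℝ)
    (hpos : ∀ l, 1 ≤ l → l ≤ r → 0 < lam l)
    (hdesc : ∀ l m, 1 ≤ l → l ≤ m → m ≤ r → lam m ≤ lam l)
    (Rk : ℕ → ℝ) (hRk : ∀ k, Rk k = (1 / 2) * ∑ l ∈ Finset.Icc 1 k, Real.logb 2 (lam l / lam k))
    (θ : ℕ → ℝ → ℝ)
    (hθ : ∀ k R, θ k R =
      (2 : ℝ) ^ (-(2 * R) / k) * (∏ l ∈ Finset.Icc 1 k, lam l) ^ ((1 : ℝ) / k)) :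
    ∀ k, 1 ≤ k → k < r → ∀ R : ℝ, 0 ≤ R →
      ((Rk k ≤ R ∧ R < Rk (k + 1)) ↔ (lam (k + 1) < θ k R ∧ θ k R ≤ lam k)) := by
  intro k hk1 hkr R hR
  have hkpos : (0:ℝ) < (k:ℝ) := by exact_mod_cast hk1
  have hkne : (k:ℝ) ≠ 0 := hkpos.ne'
  have hl2 : (0:ℝ) < Real.log 2 := Real.log_pos one_lt_two
  have hposk : 0 < lam k := hpos k hk1 hkr.le
  have hposk1 : 0 < lam (k+1) := hpos (k+1) (by omega) (by omega)
  set L : ℝ := ∑ l ∈ Finset.Icc 1 k, Real.log (lam l) with hL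
  have hP : 0 < ∏ l ∈ Finset.Icc 1 k, lam l :=
    Finset.prod_pos (fun l hl => hpos l (Finset.mem_Icc.mp hl).1
      ((Finset.mem_Icc.mp hl).2.trans hkr.le))
  have hlogP : Real.log (∏ l ∈ Finset.Icc 1 k, lam l) = L := by
    rw [Real.log_prod]
    intro l hl
    exact (hpos l (Finset.mem_Icc.mp hl).1 ((Finset.mem_Icc.mp hl).2.trans hkr.le)).ne'
  have hθpos : 0 < θ k R := by
    rw [hθ]
    positivity
  have hlogθ : Real.log (θ k R) = (L - 2*R*Real.log 2) / k := by
    rw [hθ, Real.log_mul (by positivity) (by positivity),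
      Real.log_rpow two_pos, Real.log_rpow hP, hlogP]
    field_simp
    ring
  set S : ℝ := L - 2*R*Real.log 2 with hS
  have key1 : ∀ x : ℝ, 0 < x → (θ k R ≤ x ↔ S ≤ k * Real.log x) := by
    intro x hx
    rw [← Real.log_le_log_iff hθpos hx, hlogθ, div_le_iff₀ hkpos]
    constructor <;> intro h <;> linarith
  have key2 : ∀ x : ℝ, 0 < x → (x < θ k R ↔ k * Real.log x < S) := by
    intro x hx
    rw [← Real.log_lt_log_iff hx hθpos, hlogθ, lt_div_iff₀ hkpos]
    constructor <;> intro h <;> linarith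
  have hRkval : ∀ m, 1 ≤ m → m ≤ r →
      Rk m = ((∑ l ∈ Finset.Icc 1 m, Real.log (lam l)) - m * Real.log (lam m)) /
        (2 * Real.log 2) := by
    intro m hm1 hmr
    have hm0 : 0 < lam m := hpos m hm1 hmr
    rw [hRk]
    have hc : ∀ l ∈ Finset.Icc 1 m, Real.logb 2 (lam l / lam m)
        = (Real.log (lam l) - Real.log (lam m)) / Real.log 2 := by
      intro l hl
      rw [Real.logb, Real.log_div (hpos l (Finset.mem_Icc.mp hl).1
        ((Finset.mem_Icc.mp hl).2.trans hmr)).ne' hm0.ne']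
    rw [Finset.sum_congr rfl hc, ← Finset.sum_div, Finset.sum_sub_distrib,
      Finset.sum_const, Nat.card_Icc]
    simp only [Nat.add_sub_cancel, nsmul_eq_mul]
    field_simp
  have hA : Rk k ≤ R ↔ S ≤ k * Real.log (lam k) := by
    rw [hRkval k hk1 hkr.le, div_le_iff₀ (by positivity), hS]
    constructor <;> intro h <;> linarith
  have hL' : ∑ l ∈ Finset.Icc 1 (k+1), Real.log (lam l) = L + Real.log (lam (k+1)) := by
    rw [hL, Finset.sum_Icc_succ_top (by omega)]
  have hB : R < Rk (k+1) ↔ k * Real.log (lam (k+1)) < S := by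
    rw [hRkval (k+1) (by omega) (by omega), lt_div_iff₀ (by positivity), hL', hS]
    push_cast
    constructor <;> intro h <;> nlinarith [Real.log 2, Real.log (lam (k+1))]
  rw [hA, hB, key1 (lam k) hposk, key2 (lam (k+1)) hposk1, and_comm]
end

section
/- Let σ > 0, λ₁ ≥ λ₂ > 0, and define the function G(R) = (1/2)( √(λ₁/(λ₁+σ²)) · 2^{-R} − √(λ₂/(λ₂+σ²)) )² for R in the interval [R₂(Σ_{X|Y}), R₂(Σ_Y)], where R₂(Σ_{X|Y}) = (1/2)log₂((λ₁(λ₂+σ²))/(λ₂(λ₁+σ²))) and R₂(Σ_Y) = (1/2)log₂((λ₁+σ²)/(λ₂+σ²)). If λ₁/(λ₁+σ²)² ≤ λ₂/(λ₂+σ²)², then G is monotonically increasing on this interval and attains its maximum value (1/2)(λ₂+σ²)( √λ₁/(λ₁+σ²) − √λ₂/(λ₂+σ²) )² at R = R₂(Σ_Y). -/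
lemma rpow_neg_half_logb (x : ℝ) (hx : 0 < x) :
    (2 : ℝ) ^ (-((1:ℝ)/2 * Real.logb 2 x)) = Real.sqrt x⁻¹ := by
  rw [show -((1:ℝ)/2 * Real.logb 2 x) = Real.logb 2 x * (-(1/2)) by ring,
    Real.rpow_mul (by norm_num : (0:ℝ) ≤ 2),
    Real.rpow_logb (by norm_num) (by norm_num) hx,
    Real.rpow_neg hx.le, Real.sqrt_eq_rpow, ← Real.inv_rpow hx.le]

theorem stmt_14 (σ lam₁ lam₂ : ℝ) (hσ : 0 < σ) (h₂ : 0 < lam₂) (h₁₂ : lam₂ ≤ lam₁)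
    (hsens : lam₁ / (lam₁ + σ^2)^2 ≤ lam₂ / (lam₂ + σ^2)^2) :
    MonotoneOn
      (fun R : ℝ => (1 / 2) *
        (Real.sqrt (lam₁ / (lam₁ + σ^2)) * (2 : ℝ) ^ (-R) -
          Real.sqrt (lam₂ / (lam₂ + σ^2)))^2)
      (Set.Icc ((1 / 2) * Real.logb 2 ((lam₁ * (lam₂ + σ^2)) / (lam₂ * (lam₁ + σ^2))))
               ((1 / 2) * Real.logb 2 ((lam₁ + σ^2) / (lam₂ + σ^2)))) ∧
    (1 / 2) *
        (Real.sqrt (lam₁ / (lam₁ + σ^2)) *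
            (2 : ℝ) ^ (-((1 / 2) * Real.logb 2 ((lam₁ + σ^2) / (lam₂ + σ^2)))) -
          Real.sqrt (lam₂ / (lam₂ + σ^2)))^2 =
      (1 / 2) * (lam₂ + σ^2) *
        (Real.sqrt lam₁ / (lam₁ + σ^2) - Real.sqrt lam₂ / (lam₂ + σ^2))^2 := by
  have h₁ : 0 < lam₁ := lt_of_lt_of_le h₂ h₁₂
  have hσ2 : 0 < σ^2 := by positivity
  have hp₁ : 0 < lam₁ + σ^2 := by linarith
  have hp₂ : 0 < lam₂ + σ^2 := by linarith
  set a := Real.sqrt (lam₁ / (lam₁ + σ^2)) with ha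
  set b := Real.sqrt (lam₂ / (lam₂ + σ^2)) with hb
  have ha0 : 0 < a := Real.sqrt_pos.2 (by positivity)
  have hK : 0 < lam₁ * (lam₂ + σ^2) / (lam₂ * (lam₁ + σ^2)) := by positivity
  have key : a * (2 : ℝ) ^ (-((1:ℝ)/2 * Real.logb 2 (lam₁ * (lam₂ + σ^2) / (lam₂ * (lam₁ + σ^2))))) = b := by
    rw [rpow_neg_half_logb _ hK, ha, ← Real.sqrt_mul (by positivity), hb]
    congr 1
    field_simp
  have hle : ∀ R ∈ Set.Icc ((1:ℝ)/2 * Real.logb 2 (lam₁ * (lam₂ + σ^2) / (lam₂ * (lam₁ + σ^2))))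
      ((1:ℝ)/2 * Real.logb 2 ((lam₁ + σ^2) / (lam₂ + σ^2))), a * (2 : ℝ) ^ (-R) ≤ b := by
    intro R hR
    calc a * (2:ℝ) ^ (-R)
        ≤ a * (2:ℝ) ^ (-((1:ℝ)/2 * Real.logb 2 (lam₁ * (lam₂ + σ^2) / (lam₂ * (lam₁ + σ^2))))) := by
          apply mul_le_mul_of_nonneg_left _ ha0.le
          exact Real.rpow_le_rpow_of_exponent_le (by norm_num) (by linarith [hR.1])
      _ = b := key
  constructor
  · intro x hx y hy hxy
    simp only
    have h1 : a * (2:ℝ) ^ (-x) ≤ b := hle x hx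
    have h2 : a * (2:ℝ) ^ (-y) ≤ b := hle y hy
    have h3 : a * (2:ℝ) ^ (-y) ≤ a * (2:ℝ) ^ (-x) := by
      apply mul_le_mul_of_nonneg_left _ ha0.le
      exact Real.rpow_le_rpow_of_exponent_le (by norm_num) (by linarith)
    nlinarith [mul_nonneg (sub_nonneg.2 h3) (sub_nonneg.2 h1)]
  · have hH : 0 < (lam₁ + σ^2) / (lam₂ + σ^2) := by positivity
    have e1 : a * (2 : ℝ) ^ (-((1:ℝ)/2 * Real.logb 2 ((lam₁ + σ^2) / (lam₂ + σ^2)))) =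
        Real.sqrt (lam₁ * (lam₂ + σ^2)) / (lam₁ + σ^2) := by
      rw [rpow_neg_half_logb _ hH, ha, ← Real.sqrt_mul (by positivity),
        show Real.sqrt (lam₁ * (lam₂ + σ^2)) / (lam₁ + σ^2)
           = Real.sqrt (lam₁ * (lam₂ + σ^2) / (lam₁ + σ^2)^2) by
          rw [Real.sqrt_div (by positivity), Real.sqrt_sq hp₁.le]]
      congr 1
      field_simp
    have e2 : b = Real.sqrt lam₂ / Real.sqrt (lam₂ + σ^2) := by
      rw [hb, Real.sqrt_div h₂.le]
    have hs₂ : Real.sqrt (lam₂ + σ^2) ^ 2 = lam₂ + σ^2 := Real.sq_sqrt hp₂.le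
    have hs₂0 : 0 < Real.sqrt (lam₂ + σ^2) := Real.sqrt_pos.2 hp₂
    have e3 : Real.sqrt (lam₁ * (lam₂ + σ^2)) = Real.sqrt lam₁ * Real.sqrt (lam₂ + σ^2) :=
      Real.sqrt_mul h₁.le _
    rw [show (1 / 2 : ℝ) * Real.logb 2 ((lam₁ + σ^2) / (lam₂ + σ^2))
        = (1:ℝ)/2 * Real.logb 2 ((lam₁ + σ^2) / (lam₂ + σ^2)) by norm_num, e1, e2, e3]
    have e4 : Real.sqrt lam₁ * Real.sqrt (lam₂ + σ^2) / (lam₁ + σ^2)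
        - Real.sqrt lam₂ / Real.sqrt (lam₂ + σ^2) =
        Real.sqrt (lam₂ + σ^2) * (Real.sqrt lam₁ / (lam₁ + σ^2) - Real.sqrt lam₂ / (lam₂ + σ^2)) := by
      field_simp
      linear_combination ((lam₁ + σ^2) * Real.sqrt lam₂) * hs₂
    rw [e4, mul_pow, hs₂]
    ring
end

section
/- Let λ₁ ≥ ⋯ ≥ λ_k > 0, σ > 0, M ≥ 1, R ≥ 0. Then 1 − (1/M)∑_{l=1}^k λ_l/(λ_l+σ²) + (k/M)·2^{-2R/k}(∏_{l=1}^k λ_l/(λ_l+σ²))^{1/k} ≤ 1 − (1/M)∑_{l=1}^k λ_l/(λ_l+σ²) + (2^{-2R/k}/M)(∏_{l=1}^k (λ_l+σ²))^{1/k} ∑_{l=1}^k λ_l/(λ_l+σ²)². -/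
theorem stmt_16 (σ : ℝ) (hσ : 0 < σ) (k M : ℕ) (hk : 0 < k) (hM : 1 ≤ M)
    (R : ℝ) (hR : 0 ≤ R) (lam : Fin k → ℝ)
    (hpos : ∀ l, 0 < lam l) (hdesc : ∀ i j : Fin k, i ≤ j → lam j ≤ lam i) :
    1 - (1 / (M : ℝ)) * ∑ l, lam l / (lam l + σ^2) +
        ((k : ℝ) / M) * (2 : ℝ) ^ (-(2 * R) / k) *
          (∏ l, lam l / (lam l + σ^2)) ^ ((1 : ℝ) / k) ≤
      1 - (1 / (M : ℝ)) * ∑ l, lam l / (lam l + σ^2) +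
        ((2 : ℝ) ^ (-(2 * R) / k) / M) * (∏ l, (lam l + σ^2)) ^ ((1 : ℝ) / k) *
          ∑ l, lam l / (lam l + σ^2)^2 := by
  have hden : ∀ l : Fin k, 0 < lam l + σ^2 := fun l => by have := hpos l; positivity
  set a : Fin k → ℝ := fun l => lam l / (lam l + σ^2)^2 with ha
  have hapos : ∀ l, 0 < a l := fun l => by have := hpos l; have := hden l; positivity
  have hkpos : (0:ℝ) < k := by exact_mod_cast hk
  -- AM-GM
  have hAMGM : (∏ l, a l) ^ ((1:ℝ)/k) ≤ (1/(k:ℝ)) * ∑ l, a l := by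
    have h := Real.geom_mean_le_arith_mean_weighted Finset.univ (fun _ => 1/(k:ℝ)) a
      (fun i _ => by positivity)
      (by simp [Finset.card_univ]; field_simp)
      (fun i _ => (hapos i).le)
    calc (∏ l, a l) ^ ((1:ℝ)/k) = ∏ l, a l ^ ((1:ℝ)/k) := by
          rw [← Real.finset_prod_rpow _ _ (fun i _ => (hapos i).le)]
      _ ≤ ∑ l, (1/(k:ℝ)) * a l := h
      _ = (1/(k:ℝ)) * ∑ l, a l := by rw [Finset.mul_sum]
  -- key: k * G ≤ P * S
  have hP : (0:ℝ) < ∏ l, (lam l + σ^2) := Finset.prod_pos (fun l _ => hden l)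
  have hGsplit : (∏ l, lam l / (lam l + σ^2)) ^ ((1:ℝ)/k)
      = (∏ l, a l) ^ ((1:ℝ)/k) * (∏ l, (lam l + σ^2)) ^ ((1:ℝ)/k) := by
    rw [← Real.mul_rpow (Finset.prod_nonneg fun l _ => (hapos l).le) hP.le,
      ← Finset.prod_mul_distrib]
    congr 1
    apply Finset.prod_congr rfl
    intro l _
    have h1 := (hden l).ne'
    simp only [ha]
    field_simp [ha]
  have hkey : (k:ℝ) * (∏ l, lam l / (lam l + σ^2)) ^ ((1:ℝ)/k)
      ≤ (∏ l, (lam l + σ^2)) ^ ((1:ℝ)/k) * ∑ l, a l := by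
    rw [hGsplit]
    have hPr : (0:ℝ) ≤ (∏ l, (lam l + σ^2)) ^ ((1:ℝ)/k) := Real.rpow_nonneg hP.le _
    have := mul_le_mul_of_nonneg_left hAMGM hPr
    calc (k:ℝ) * ((∏ l, a l) ^ ((1:ℝ)/k) * (∏ l, (lam l + σ^2)) ^ ((1:ℝ)/k))
        ≤ (k:ℝ) * ((∏ l, (lam l + σ^2)) ^ ((1:ℝ)/k) * ((1/(k:ℝ)) * ∑ l, a l)) := by
          nlinarith [mul_le_mul_of_nonneg_left hAMGM hPr]
      _ = (∏ l, (lam l + σ^2)) ^ ((1:ℝ)/k) * ∑ l, a l := by field_simp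
  have hc : (0:ℝ) < (2:ℝ) ^ (-(2*R)/k) := Real.rpow_pos_of_pos two_pos _
  have hMpos : (0:ℝ) < M := by exact_mod_cast hM
  have hfin : ((k:ℝ)/M) * (2:ℝ)^(-(2*R)/k) * (∏ l, lam l / (lam l + σ^2)) ^ ((1:ℝ)/k)
      ≤ ((2:ℝ)^(-(2*R)/k)/M) * (∏ l, (lam l + σ^2)) ^ ((1:ℝ)/k) * ∑ l, a l := by
    calc ((k:ℝ)/M) * (2:ℝ)^(-(2*R)/k) * (∏ l, lam l / (lam l + σ^2)) ^ ((1:ℝ)/k)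
        = ((2:ℝ)^(-(2*R)/k)/M) * ((k:ℝ) * (∏ l, lam l / (lam l + σ^2)) ^ ((1:ℝ)/k)) := by ring
      _ ≤ ((2:ℝ)^(-(2*R)/k)/M) * ((∏ l, (lam l + σ^2)) ^ ((1:ℝ)/k) * ∑ l, a l) := by
          apply mul_le_mul_of_nonneg_left hkey; positivity
      _ = ((2:ℝ)^(-(2*R)/k)/M) * (∏ l, (lam l + σ^2)) ^ ((1:ℝ)/k) * ∑ l, a l := by ring
  linarith [hfin]
end
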